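/- Let n divide Q − 1 and let ω ∈ Lˣ have multiplicative order n. A vector V ∈ L^n is the discrete Fourier transform V_s = ∑_{i=0}^{n−1} v_i ω^{is} of a unique vector v ∈ K^n if and only if V_{qs mod n} = V_s^q for all s ∈ ℤ/nℤ. In particular the set S_n = {V ∈ L^n : V_{qi mod n} = V_i^q for all i} is exactly the image of K^n under the DFT. -/

import Mathlib

open Finset

section Aux

variable {n : ℕ} [NeZero n] {L : Type*} [Field L] {ω : L}

lemma aux_pow_mod (hω : orderOf ω = n) (s : ℕ) : ω ^ (s % n) = ω ^ s := by
  conv_rhs => rw [← pow_mod_orderOf]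
  rw [hω]

lemma aux_pow_val_add (hω : orderOf ω = n) (a b : ZMod n) :
    ω ^ (a + b).val = ω ^ a.val * ω ^ b.val := by
  rw [ZMod.val_add, aux_pow_mod hω, pow_add]

lemma aux_pow_val_mul (hω : orderOf ω = n) (a b : ZMod n) :
    ω ^ (a * b).val = (ω ^ a.val) ^ b.val := by
  rw [ZMod.val_mul, aux_pow_mod hω, pow_mul]

lemma aux_pow_natCast_mul (hω : orderOf ω = n) (a : ℕ) (c : ZMod n) :
    ω ^ (((a : ZMod n)) * c).val = (ω ^ c.val) ^ a := by
  rw [mul_comm, aux_pow_val_mul hω, ZMod.val_natCast, ← pow_mul, ← pow_mul,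
    ← aux_pow_mod hω (c.val * (a % n)), ← aux_pow_mod hω (c.val * a)]
  congr 1
  exact Nat.ModEq.mul_left c.val (Nat.mod_modEq a n)

lemma aux_pow_val_eq_one (hω : orderOf ω = n) (a : ZMod n) :
    ω ^ a.val = 1 ↔ a = 0 := by
  rw [← orderOf_dvd_iff_pow_eq_one, hω, ← ZMod.val_eq_zero]
  constructor
  · intro h
    exact Nat.eq_zero_of_dvd_of_lt h (ZMod.val_lt a)
  · intro h; rw [h]; exact dvd_zero n

lemma aux_orth (hω : orderOf ω = n) (c : ZMod n) :
    ∑ s : ZMod n, ω ^ (c * s).val = if c = 0 then (n : L) else 0 := by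
  split_ifs with h
  · subst h
    simp [ZMod.val_zero, ZMod.card]
  · have hζ : ω ^ c.val ≠ 1 := fun hc => h ((aux_pow_val_eq_one hω c).mp hc)
    have hsum : ∑ s : ZMod n, ω ^ (c * s).val = ∑ i ∈ range n, (ω ^ c.val) ^ i := by
      rw [Finset.sum_congr rfl fun s _ => aux_pow_val_mul hω c s]
      obtain ⟨n', rfl⟩ := Nat.exists_eq_succ_of_ne_zero (NeZero.ne n)
      exact Fin.sum_univ_eq_sum_range (fun i => (ω ^ c.val) ^ i) (n' + 1)
    rw [hsum]
    have hgeo := geom_sum_mul (ω ^ c.val) n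
    have hζn : (ω ^ c.val) ^ n = 1 := by
      have hωn : ω ^ n = 1 := by rw [← hω]; exact pow_orderOf_eq_one ω
      rw [← pow_mul, mul_comm, pow_mul, hωn, one_pow]
    rw [hζn, sub_self] at hgeo
    rcases mul_eq_zero.mp hgeo with h1 | h2
    · exact h1
    · exact absurd (sub_eq_zero.mp h2) hζ

end Aux

/-- the Frobenius relation characterizes DFT spectra of base-field vectors. -/
theorem stmt_1 (q m n : ℕ) (hq : IsPrimePow q) (hm : 0 < m)
    (L : Type*) [Field L] [Fintype L] (hL : Fintype.card L = q ^ m)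
    [NeZero n] (hn : n ∣ q ^ m - 1)
    (ω : L) (hω : orderOf ω = n) :
    (∀ V : ZMod n → L,
      (∃! v : ZMod n → L, (∀ i, v i ^ q = v i) ∧
          ∀ s : ZMod n, V s = ∑ i : ZMod n, v i * ω ^ (i * s).val) ↔
        ∀ s : ZMod n, V ((q : ZMod n) * s) = V s ^ q) ∧
    {V : ZMod n → L | ∀ i : ZMod n, V ((q : ZMod n) * i) = V i ^ q} =
      (fun (v : ZMod n → L) (s : ZMod n) => ∑ i : ZMod n, v i * ω ^ (i * s).val) ''
        {v : ZMod n → L | ∀ i, v i ^ q = v i} := by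
  obtain ⟨p, k, hp', hk, rfl⟩ := hq
  have hp : p.Prime := Nat.prime_iff.mpr hp'
  haveI : Fact p.Prime := ⟨hp⟩
  -- characteristic of L is p
  haveI hcp : CharP L (ringChar L) := ringChar.charP L
  obtain ⟨a, hrc_prime, hcard⟩ := FiniteField.card L (ringChar L)
  have hpr : ringChar L = p := by
    have hdvd : p ∣ ringChar L ^ (a : ℕ) := by
      rw [← hcard, hL, ← pow_mul]
      exact dvd_pow_self p (by positivity)
    exact ((Nat.prime_dvd_prime_iff_eq hp hrc_prime).mp
      (hp.dvd_of_dvd_pow hdvd)).symm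
  haveI : CharP L p := hpr ▸ hcp
  haveI : ExpChar L p := ExpChar.prime hp
  -- the Frobenius x ↦ x ^ p ^ k
  set φ : L →+* L := iterateFrobenius L p k with hφdef
  have hφ : ∀ x : L, φ x = x ^ p ^ k := fun x => iterateFrobenius_def p k x
  have hq1 : 1 ≤ (p ^ k) ^ m := Nat.one_le_pow _ _ (Nat.pow_pos (n := k) hp.pos)
  -- n is invertible in L
  have hnL : (n : L) ≠ 0 := by
    intro h
    have hpn : p ∣ n := (CharP.cast_eq_zero_iff L p n).mp h
    have h1 : p ∣ (p ^ k) ^ m - 1 := hpn.trans hn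
    have h2 : p ∣ (p ^ k) ^ m := dvd_pow (dvd_pow_self p hk.ne') hm.ne'
    have h3 := Nat.dvd_sub h2 h1
    rw [Nat.sub_sub_self hq1] at h3
    exact hp.one_lt.ne' (Nat.dvd_one.mp h3)
  -- q is a unit mod n
  have hunit : IsUnit ((p ^ k : ℕ) : ZMod n) := by
    apply IsUnit.of_mul_eq_one (((p ^ k : ℕ) : ZMod n) ^ (m - 1))
    have hm1 : m - 1 + 1 = m := Nat.succ_pred_eq_of_pos hm
    rw [← pow_succ', hm1, ← Nat.cast_pow, ← Nat.sub_add_cancel hq1]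
    push_cast
    rw [(ZMod.natCast_eq_zero_iff _ n).mpr hn, zero_add]
  have hbij : Function.Bijective (fun s : ZMod n => ((p ^ k : ℕ) : ZMod n) * s) :=
    IsUnit.isUnit_iff_mulLeft_bijective.mp hunit
  -- DFT and inverse DFT
  set F : (ZMod n → L) → ZMod n → L :=
    fun v s => ∑ i : ZMod n, v i * ω ^ (i * s).val with hFdef
  set G : (ZMod n → L) → ZMod n → L :=
    fun V j => (n : L)⁻¹ * ∑ s : ZMod n, V s * ω ^ ((-j) * s).val with hGdef
  have hGF : ∀ v : ZMod n → L, G (F v) = v := by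
    intro v
    funext j
    show (n : L)⁻¹ * ∑ s : ZMod n,
        (∑ i : ZMod n, v i * ω ^ (i * s).val) * ω ^ ((-j) * s).val = v j
    have h1 : ∀ s : ZMod n, (∑ i : ZMod n, v i * ω ^ (i * s).val) * ω ^ ((-j) * s).val
        = ∑ i : ZMod n, v i * ω ^ ((i - j) * s).val := by
      intro s
      rw [Finset.sum_mul]
      refine Finset.sum_congr rfl fun i _ => ?_
      rw [mul_assoc, ← aux_pow_val_add hω, neg_mul, ← sub_eq_add_neg, ← sub_mul]
    rw [Finset.sum_congr rfl fun s _ => h1 s, Finset.sum_comm]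
    have h2 : ∀ i : ZMod n, ∑ s : ZMod n, v i * ω ^ ((i - j) * s).val
        = v i * (if i = j then (n : L) else 0) := by
      intro i
      rw [← Finset.mul_sum, aux_orth hω]
      congr 1
      simp [sub_eq_zero]
    rw [Finset.sum_congr rfl fun i _ => h2 i]
    simp only [mul_ite, mul_zero]
    rw [Finset.sum_ite_eq' Finset.univ j (fun i => v i * (n : L))]
    rw [if_pos (Finset.mem_univ j)]
    field_simp
  have hFinj : Function.Injective F := Function.LeftInverse.injective hGF
  have hFsurj : Function.Surjective F :=
    Finite.injective_iff_surjective.mp hFinj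
  have hFG : ∀ V : ZMod n → L, F (G V) = V := by
    intro V
    obtain ⟨v, rfl⟩ := hFsurj V
    rw [hGF v]
  -- Frobenius forward
  have key1 : ∀ v : ZMod n → L, (∀ i, v i ^ p ^ k = v i) →
      ∀ s : ZMod n, F v (((p ^ k : ℕ) : ZMod n) * s) = (F v s) ^ p ^ k := by
    intro v hv s
    have : (F v s) ^ p ^ k = φ (F v s) := (hφ _).symm
    rw [this]
    show (∑ i : ZMod n, v i * ω ^ ((i * (((p ^ k : ℕ) : ZMod n) * s)).val))
      = φ (∑ i : ZMod n, v i * ω ^ ((i * s).val))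
    rw [map_sum]
    refine Finset.sum_congr rfl fun i _ => ?_
    rw [map_mul, hφ, hv i, hφ, ← aux_pow_natCast_mul hω,
      mul_left_comm i (((p ^ k : ℕ) : ZMod n)) s]
  -- Frobenius backward
  have key2 : ∀ V : ZMod n → L, (∀ s : ZMod n, V (((p ^ k : ℕ) : ZMod n) * s) = V s ^ p ^ k) →
      ∀ i : ZMod n, (G V i) ^ p ^ k = G V i := by
    intro V hV i
    have h0 : (G V i) ^ p ^ k = φ (G V i) := (hφ _).symm
    rw [h0]
    show φ ((n : L)⁻¹ * ∑ s : ZMod n, V s * ω ^ ((-i) * s).val)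
      = (n : L)⁻¹ * ∑ s : ZMod n, V s * ω ^ ((-i) * s).val
    rw [map_mul, map_inv₀, map_natCast, map_sum]
    congr 1
    have h1 : ∀ s : ZMod n, φ (V s * ω ^ ((-i) * s).val)
        = V (((p ^ k : ℕ) : ZMod n) * s)
          * ω ^ ((-i) * (((p ^ k : ℕ) : ZMod n) * s)).val := by
      intro s
      rw [map_mul, hφ, hφ, ← hV s, ← aux_pow_natCast_mul hω,
        mul_left_comm (((p ^ k : ℕ) : ZMod n)) (-i) s]
    rw [Finset.sum_congr rfl fun s _ => h1 s]
    exact Fintype.sum_bijective _ hbij _ _ (fun s => rfl)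
  -- assemble the two statements
  have main : ∀ V : ZMod n → L,
      (∃! v : ZMod n → L, (∀ i, v i ^ p ^ k = v i) ∧
          ∀ s : ZMod n, V s = ∑ i : ZMod n, v i * ω ^ (i * s).val) ↔
        ∀ s : ZMod n, V (((p ^ k : ℕ) : ZMod n) * s) = V s ^ p ^ k := by
    intro V
    constructor
    · rintro ⟨v, ⟨hv1, hv2⟩, -⟩ s
      have hVF : V = F v := funext hv2
      rw [hVF]
      exact key1 v hv1 s
    · intro hV
      refine ⟨G V, ⟨key2 V hV, ?_⟩, ?_⟩
      · intro s
        have := congrFun (hFG V) s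
        exact this.symm
      · rintro y ⟨-, hy2⟩
        have : F y = V := (funext hy2).symm
        rw [← this, hGF y]
  constructor
  · intro V
    have hcast : ((p ^ k : ℕ) : ZMod n) = ((p : ZMod n) ^ k) := by push_cast; rfl
    rw [← hcast] at *
    exact main V
  · ext V
    constructor
    · intro hV
      refine ⟨G V, key2 V (by simpa using hV), ?_⟩
      exact hFG V
    · rintro ⟨v, hv1, rfl⟩
      intro s
      exact key1 v hv1 s
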